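/- Let T be a nowhere dense tree on 2^{<ω} and let f_T(n) = min{m : for every η of length n there is τ of length m extending η with τ ∉ T}. Let g : ω → ω and let (n_i), (n'_i) be increasing sequences of naturals with f_T^{g(i)}(n_i) ≤ n'_i < n_{i+1} for all i (where f^m denotes m-fold iteration). Then for every tree S with |S ∩ 2^{n'_i}| ≤ g(i) for every i, the set T + S = {η + σ : η ∈ T, σ ∈ S of the same length} is nowhere dense in 2^{<ω}. -/

import Mathlib

open MeasureTheory Pointwise

/-- Cantor space `2^ω` with componentwise addition mod 2. -/
abbrev Cantor : Type := ℕ → ZMod 2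
/-- Finite binary sequences, the nodes of `2^{<ω}`. -/
abbrev FinSeq : Type := List (ZMod 2)

instance : TopologicalSpace (ZMod 2) := ⊥
instance : DiscreteTopology (ZMod 2) := ⟨rfl⟩
noncomputable instance : MeasurableSpace Cantor := borel Cantor
instance : BorelSpace Cantor := ⟨rfl⟩

/-- The uniform (Lebesgue) product measure on `2^ω`, realized as the Haar measure of the
compact group `2^ω` normalized so that the whole space has measure 1. -/
noncomputable def μC : Measure Cantor := Measure.addHaarMeasure ⊤

/-- `X` is null-additive: `X + A` is null for every null `A`. -/
def NullAdditive (X : Set Cantor) : Prop := ∀ A : Set Cantor, μC A = 0 → μC (X + A) = 0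

/-- `X` is meager-additive: `X + A` is meager for every meager `A`. -/
def MeagerAdditive (X : Set Cantor) : Prop := ∀ A : Set Cantor, IsMeagre A → IsMeagre (X + A)

/-- A tree on `2^{<ω}`: nonempty, closed under initial segments, and every node has
extensions in the tree of every greater length. -/
def IsTree (T : Set FinSeq) : Prop :=
  T.Nonempty ∧ (∀ σ τ : FinSeq, σ <+: τ → τ ∈ T → σ ∈ T) ∧
    ∀ σ ∈ T, ∀ n, σ.length < n → ∃ τ ∈ T, σ <+: τ ∧ τ.length = n

/-- Restriction `x↾n` of `x ∈ 2^ω`. -/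
def res (x : Cantor) (n : ℕ) : FinSeq := (List.range n).map x

/-- `Lim T = {x ∈ 2^ω : ∀ n, x↾n ∈ T}`. -/
def LimT (T : Set FinSeq) : Set Cantor := {x | ∀ n, res x n ∈ T}

/-- A nowhere dense tree: every node has an extension outside the tree. -/
def NwdTree (T : Set FinSeq) : Prop := ∀ η ∈ T, ∃ τ : FinSeq, η <+: τ ∧ τ ∉ T

/-- Componentwise mod-2 addition of finite sequences (of the same length). -/
def finAdd : FinSeq → FinSeq → FinSeq := List.zipWith (· + ·)

/-- `T + S = {η + σ : η ∈ T, σ ∈ S, same length}`. -/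
def treeSum (T S : Set FinSeq) : Set FinSeq :=
  {ρ | ∃ η ∈ T, ∃ σ ∈ S, η.length = σ.length ∧ ρ = finAdd η σ}

/-- `T^{[η]} = {τ ∈ T : τ ⊑ η or η ⊑ τ}`. -/
def through (T : Set FinSeq) (η : FinSeq) : Set FinSeq := {τ ∈ T | τ <+: η ∨ η <+: τ}

/-- `A^{fin}`: points agreeing with some point of `A` at all but finitely many coordinates. -/
def finEq (A : Set Cantor) : Set Cantor := {y | ∃ x ∈ A, ∀ᶠ n in Filter.atTop, y n = x n}

/-- `U^{⟨ν⟩} = {τ : ν⌢τ ∈ U}`. -/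
def above (U : Set FinSeq) (ν : FinSeq) : Set FinSeq := {τ | ν ++ τ ∈ U}

/-- A corset: a nondecreasing function `ω → ω \ {0}` tending to infinity. -/
def Corset (f : ℕ → ℕ) : Prop :=
  Monotone f ∧ (∀ n, 0 < f n) ∧ Filter.Tendsto f Filter.atTop Filter.atTop

/-- `S` is of width `f`: `|S ∩ 2^n| ≤ f n` for all `n`. -/
def widthLe (S : Set FinSeq) (f : ℕ → ℕ) : Prop := ∀ n, {τ ∈ S | τ.length = n}.ncard ≤ f n

/-- `S` is almost of width `f`: `|S ∩ 2^n| ≤ f n` for all sufficiently large `n`. -/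
def almostWidthLe (S : Set FinSeq) (f : ℕ → ℕ) : Prop :=
  ∀ᶠ n in Filter.atTop, {τ ∈ S | τ.length = n}.ncard ≤ f n

lemma finAdd_length (a b : FinSeq) : (finAdd a b).length = min a.length b.length :=
  List.length_zipWith ..

lemma zmod2_cancel (x y : ZMod 2) : x + y + y = x := by revert x y; decide

lemma finAdd_cancel : ∀ (a b : FinSeq), a.length = b.length → finAdd (finAdd a b) b = a
  | [], [], _ => rfl
  | x :: a, y :: b, h => by
    have ih := finAdd_cancel a b (by simpa using h)
    simp only [finAdd, List.zipWith] at ih ⊢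
    rw [ih, zmod2_cancel]

lemma finAdd_prefix {a a' b b' : FinSeq} (h : a.length = b.length)
    (ha : a <+: a') (hb : b <+: b') : finAdd a b <+: finAdd a' b' := by
  obtain ⟨c, rfl⟩ := ha
  obtain ⟨d, rfl⟩ := hb
  unfold finAdd
  rw [List.zipWith_append h]
  exact ⟨_, rfl⟩

lemma pad_seq (ρ : FinSeq) (K : ℕ) (h : ρ.length ≤ K) :
    ∃ τ : FinSeq, ρ <+: τ ∧ τ.length = K :=
  ⟨ρ ++ List.replicate (K - ρ.length) 0, ⟨_, rfl⟩, by simp; omega⟩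

lemma take_pref_take (a : FinSeq) {m k : ℕ} (h : m ≤ k) : a.take m <+: a.take k := by
  have : a.take m = (a.take k).take m := by rw [List.take_take, min_eq_left h]
  rw [this]; exact List.take_prefix _ _

lemma f_spec (T : Set FinSeq) (hcl : ∀ σ τ : FinSeq, σ <+: τ → τ ∈ T → σ ∈ T)
    (hnwd : NwdTree T) (f : ℕ → ℕ)
    (hf : ∀ m, f m = sInf {k | ∀ η : FinSeq, η.length = m →
      ∃ τ : FinSeq, η <+: τ ∧ τ.length = k ∧ τ ∉ T}) (m : ℕ) :
    ∀ η : FinSeq, η.length = m → ∃ τ : FinSeq, η <+: τ ∧ τ.length = f m ∧ τ ∉ T := by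
  have hw : ∀ η : FinSeq, ∃ τ, η <+: τ ∧ τ ∉ T := by
    intro η
    by_cases hη : η ∈ T
    · exact hnwd η hη
    · exact ⟨η, List.prefix_refl η, hη⟩
  choose w hw1 hw2 using hw
  have hfin : {l : FinSeq | l.length = m}.Finite := List.finite_length_eq (ZMod 2) m
  set K := max m (hfin.toFinset.sup fun η => (w η).length) with hK
  have hne : {k | ∀ η : FinSeq, η.length = m →
      ∃ τ : FinSeq, η <+: τ ∧ τ.length = k ∧ τ ∉ T}.Nonempty := by
    refine ⟨K, fun η hη => ?_⟩
    have hmem : η ∈ hfin.toFinset := by simp [hfin.mem_toFinset, hη]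
    have h1 : (w η).length ≤ K :=
      le_max_of_le_right (Finset.le_sup (f := fun η => (w η).length) hmem)
    obtain ⟨τ, hpre, hlen⟩ := pad_seq (w η) K h1
    exact ⟨τ, (hw1 η).trans hpre, hlen, fun ht => hw2 η (hcl _ _ hpre ht)⟩
  have := Nat.sInf_mem hne
  rw [← hf m] at this
  exact this

lemma key_lemma (T : Set FinSeq) (hcl : ∀ σ τ : FinSeq, σ <+: τ → τ ∈ T → σ ∈ T)
    (f : ℕ → ℕ) (hge : ∀ m, m ≤ f m)
    (hspec : ∀ (m : ℕ) (η : FinSeq), η.length = m →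
      ∃ τ : FinSeq, η <+: τ ∧ τ.length = f m ∧ τ ∉ T)
    (L : ℕ) :
    ∀ F : Finset FinSeq, (∀ σ ∈ F, σ.length = L) → ∀ τ : FinSeq, f^[F.card] τ.length ≤ L →
      ∃ τ' : FinSeq, τ <+: τ' ∧ τ'.length = f^[F.card] τ.length ∧
        ∀ σ ∈ F, ∀ ρ : FinSeq, τ' <+: ρ → ρ.length ≤ L →
          finAdd ρ (σ.take ρ.length) ∉ T := by
  intro F
  induction F using Finset.induction_on with
  | empty => exact fun _ τ _ => ⟨τ, List.prefix_refl τ, rfl, by simp⟩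
  | @insert a s ha ih =>
    intro hF τ hle
    rw [Finset.card_insert_of_notMem ha] at hle ⊢
    have hmono : f^[s.card] τ.length ≤ f^[s.card + 1] τ.length := by
      rw [Function.iterate_succ_apply']; exact hge _
    obtain ⟨τ₁, hpre₁, hlen₁, hprop₁⟩ :=
      ih (fun σ hσ => hF σ (Finset.mem_insert_of_mem hσ)) τ (le_trans hmono hle)
    have haL : a.length = L := hF a (Finset.mem_insert_self a s)
    have hτ₁L : τ₁.length ≤ L := by rw [hlen₁]; exact le_trans hmono hle
    have hfL : f τ₁.length ≤ L := by
      rw [hlen₁, ← Function.iterate_succ_apply' f s.card]; exact hle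
    have htake_len : (a.take τ₁.length).length = τ₁.length := by
      simp [haL]; omega
    have hηlen : (finAdd τ₁ (a.take τ₁.length)).length = τ₁.length := by
      rw [finAdd_length, htake_len, min_self]
    obtain ⟨η', hpre', hlen', hout⟩ := hspec τ₁.length _ hηlen
    set τ₂ := finAdd η' (a.take η'.length) with hτ₂
    have htake'_len : (a.take η'.length).length = η'.length := by
      simp [haL]; omega
    have hτ₂len : τ₂.length = f τ₁.length := by
      rw [hτ₂, finAdd_length, htake'_len, min_self, hlen']
    have hback : finAdd (finAdd τ₁ (a.take τ₁.length)) (a.take τ₁.length) = τ₁ :=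
      finAdd_cancel τ₁ _ htake_len.symm
    have hpre₂ : τ₁ <+: τ₂ := by
      rw [← hback]
      exact finAdd_prefix (by rw [hηlen, htake_len]) hpre'
        (take_pref_take a (by rw [hlen']; exact hge _))
    have hcancel₂ : finAdd τ₂ (a.take τ₂.length) = η' := by
      have : τ₂.length = η'.length := by rw [hτ₂len, hlen']
      rw [this]
      exact finAdd_cancel η' _ htake'_len.symm
    refine ⟨τ₂, hpre₁.trans hpre₂, by rw [hτ₂len, hlen₁, Function.iterate_succ_apply'], ?_⟩
    intro σ hσ ρ hρpre hρL
    rcases Finset.mem_insert.1 hσ with rfl | hσs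
    · intro hmem
      apply hout
      apply hcl _ _ _ hmem
      rw [← hcancel₂]
      refine finAdd_prefix ?_ hρpre (take_pref_take σ hρpre.length_le)
      have h2L : τ₂.length ≤ L := hτ₂len ▸ hfL
      simp only [List.length_take, haL]
      omega
    · exact hprop₁ σ hσs ρ (hpre₂.trans hρpre) hρL

/-- Lemma 6: if `T` is a nowhere dense tree with modulus `f = f_T`, and
`f^[g i] (n i) ≤ n' i < n (i+1)`, then for every tree `S` of width `(n', g)`, the
sum `T + S` is nowhere dense. -/
theorem stmt1 (T : Set FinSeq) (hT : IsTree T) (hnwd : NwdTree T)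
    (f : ℕ → ℕ)
    (hf : ∀ m, f m = sInf {k | ∀ η : FinSeq, η.length = m →
      ∃ τ : FinSeq, η <+: τ ∧ τ.length = k ∧ τ ∉ T})
    (g : ℕ → ℕ) (n n' : ℕ → ℕ) (hn : StrictMono n) (hn' : StrictMono n')
    (hc : ∀ i, f^[g i] (n i) ≤ n' i ∧ n' i < n (i + 1))
    (S : Set FinSeq) (hS : IsTree S)
    (hw : ∀ i, {τ ∈ S | τ.length = n' i}.ncard ≤ g i) :
    NwdTree (treeSum T S) := by
  intro ρ _
  have hspec := f_spec T hT.2.1 hnwd f hf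
  have hge : ∀ m, m ≤ f m := by
    intro m
    obtain ⟨τ, hpre, hlen, -⟩ := hspec m (List.replicate m 0) (by simp)
    calc m = (List.replicate m (0 : ZMod 2)).length := by simp
    _ ≤ τ.length := hpre.length_le
    _ = f m := hlen
  set i := ρ.length with hi
  obtain ⟨ρ₀, hpre₀, hlen₀⟩ := pad_seq ρ (n i) hn.le_apply
  have hfin : {τ ∈ S | τ.length = n' i}.Finite :=
    (List.finite_length_eq (ZMod 2) (n' i)).subset (fun τ hτ => hτ.2)
  set F := hfin.toFinset with hFdef
  have hFlen : ∀ σ ∈ F, σ.length = n' i := fun σ hσ => ((hfin.mem_toFinset).1 hσ).2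
  have hcard : F.card ≤ g i := by
    rw [hFdef, ← Set.ncard_eq_toFinset_card _ hfin]; exact hw i
  have hiter : ∀ j k : ℕ, j ≤ k → ∀ m, f^[j] m ≤ f^[k] m := by
    intro j k hjk m
    induction k with
    | zero => simpa [Nat.le_zero.1 hjk] using le_refl m
    | succ k ihk =>
      rcases Nat.lt_or_ge j (k+1) with h | h
      · exact le_trans (ihk (Nat.lt_succ_iff.1 h)) (by
          rw [Function.iterate_succ_apply' f k]; exact hge _)
      · have : j = k + 1 := le_antisymm hjk h
        subst this; exact le_refl _
  have hle : f^[F.card] ρ₀.length ≤ n' i := by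
    rw [hlen₀]; exact le_trans (hiter _ _ hcard _) (hc i).1
  obtain ⟨τ', hpre', hlen', hprop⟩ :=
    key_lemma T hT.2.1 f hge hspec (n' i) F hFlen ρ₀ hle
  obtain ⟨τs, hpres, hlens⟩ := pad_seq τ' (n' i) (by rw [hlen']; exact hle)
  refine ⟨τs, hpre₀.trans (hpre'.trans hpres), ?_⟩
  rintro ⟨η, hη, σ, hσ, hlen_eq, heq⟩
  have hσlen : σ.length = n' i := by
    have h1 := congrArg List.length heq
    rw [finAdd_length, hlen_eq, min_self, hlens] at h1
    omega
  have hσF : σ ∈ F := (hfin.mem_toFinset).2 ⟨hσ, hσlen⟩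
  have hkill := hprop σ hσF τs hpres (le_of_eq hlens)
  apply hkill
  have htk : σ.take τs.length = σ := by rw [hlens, ← hσlen, List.take_length]
  rw [htk, heq, finAdd_cancel η σ hlen_eq]
  exact hη
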